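/- If T : E → F is an operator between Banach lattices whose adjoint T' : F' → E' is order M-weakly compact, then T is order L-weakly compact. -/

import Mathlib

open Filter Topology NormedSpace

open Filter Topology

section Defs

/-- A sequence in a lattice ordered group is pairwise disjoint. -/
def DisjSeq {G : Type*} [Lattice G] [AddCommGroup G] (y : ℕ → G) : Prop :=
  ∀ m n : ℕ, m ≠ n → |y m| ⊓ |y n| = 0

/-- The solid hull of a set. -/
def SolidHull {G : Type*} [Lattice G] [AddCommGroup G] (A : Set G) : Set G :=
  {z | ∃ a ∈ A, |z| ≤ |a|}

/-- A sequence is order bounded. -/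
def OrdBddSeq {G : Type*} [Preorder G] (y : ℕ → G) : Prop :=
  ∃ a b : G, ∀ n, a ≤ y n ∧ y n ≤ b

/-- A set is L-weakly compact: every disjoint sequence in its solid hull is norm null. -/
def LWCompactSet {G : Type*} [NormedAddCommGroup G] [Lattice G] (A : Set G) : Prop :=
  ∀ y : ℕ → G, (∀ n, y n ∈ SolidHull A) → DisjSeq y →
    Tendsto (fun n => ‖y n‖) atTop (𝓝 0)

/-- An operator is order L-weakly compact. -/
def OrderLWC {G H : Type*} [NormedAddCommGroup G] [Lattice G] [NormedSpace ℝ G]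
    [NormedAddCommGroup H] [Lattice H] [NormedSpace ℝ H] (T : G →L[ℝ] H) : Prop :=
  ∀ x : G, 0 ≤ x → LWCompactSet (T '' Set.Icc 0 x)

/-- An operator is L-weakly compact. -/
def LWC {X H : Type*} [NormedAddCommGroup X] [NormedSpace ℝ X]
    [NormedAddCommGroup H] [Lattice H] [NormedSpace ℝ H] (T : X →L[ℝ] H) : Prop :=
  LWCompactSet (T '' Metric.closedBall 0 1)

/-- An operator is M-weakly compact. -/
def MWC {G Y : Type*} [NormedAddCommGroup G] [Lattice G] [NormedSpace ℝ G]
    [NormedAddCommGroup Y] [NormedSpace ℝ Y] (T : G →L[ℝ] Y) : Prop :=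
  ∀ x : ℕ → G, (∃ C, ∀ n, ‖x n‖ ≤ C) → DisjSeq x →
    Tendsto (fun n => ‖T (x n)‖) atTop (𝓝 0)

/-- An operator is order M-weakly compact. -/
def OrderMWC {G H : Type*} [NormedAddCommGroup G] [Lattice G] [NormedSpace ℝ G]
    [NormedAddCommGroup H] [NormedSpace ℝ H] [Lattice (StrongDual ℝ H)]
    (T : G →L[ℝ] H) : Prop :=
  ∀ x : ℕ → G, (∀ n, ‖x n‖ ≤ 1) → DisjSeq x →
    ∀ f : ℕ → StrongDual ℝ H, OrdBddSeq f →
      Tendsto (fun n => f n (T (x n))) atTop (𝓝 0)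

/-- The norm is order continuous: every decreasing net with infimum `0` is norm null. -/
def OrderContinuousNorm (G : Type*) [NormedAddCommGroup G] [Lattice G] : Prop :=
  ∀ (ι : Type*) [Preorder ι] [Nonempty ι] [IsDirected ι (· ≤ ·)] (x : ι → G),
    Antitone x → IsGLB (Set.range x) 0 → Tendsto (fun i => ‖x i‖) atTop (𝓝 0)

/-- An operator between Banach lattices is order bounded. -/
def OrderBoundedOp {G H : Type*} [NormedAddCommGroup G] [Lattice G] [NormedSpace ℝ G]
    [NormedAddCommGroup H] [Lattice H] [NormedSpace ℝ H] (T : G →L[ℝ] H) : Prop :=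
  ∀ a b : G, ∃ c d : H, ∀ x : G, a ≤ x → x ≤ b → c ≤ T x ∧ T x ≤ d

/-- An operator into a Banach lattice is strong order bounded. -/
def StrongOrderBounded {X H : Type*} [NormedAddCommGroup X] [NormedSpace ℝ X]
    [NormedAddCommGroup H] [Lattice H] [NormedSpace ℝ H] (T : X →L[ℝ] H) : Prop :=
  ∃ a b : H, ∀ x : X, ‖x‖ ≤ 1 → a ≤ T x ∧ T x ≤ b

end Defs


section LatticeLemmas

variable {α : Type*} [Lattice α] [AddCommGroup α] [CovariantClass α α (· + ·) (· ≤ ·)]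

lemma inf_add_le_of_nonneg' {a b c : α} (ha : 0 ≤ a) (hb : 0 ≤ b) (hc : 0 ≤ c) :
    a ⊓ (b + c) ≤ a ⊓ b + a ⊓ c := by
  set d := a ⊓ (b + c) with hd
  have hda : d ≤ a := inf_le_left
  have hdbc : d ≤ b + c := inf_le_right
  have h1 : d - a ⊓ b = (d - a) ⊔ (d - b) := by
    rw [sub_eq_add_neg, neg_inf, add_sup, ← sub_eq_add_neg, ← sub_eq_add_neg]
  have h2 : d - a ≤ a ⊓ c :=
    le_inf ((sub_nonpos.mpr hda).trans ha) ((sub_nonpos.mpr hda).trans hc)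
  have h3 : d - b ≤ a ⊓ c :=
    le_inf (sub_le_iff_le_add.mpr (hda.trans (le_add_of_nonneg_right hb)))
      (sub_le_iff_le_add.mpr (by rwa [add_comm] at hdbc))
  have h4 : d - a ⊓ b ≤ a ⊓ c := by rw [h1]; exact sup_le h2 h3
  calc d = (d - a ⊓ b) + a ⊓ b := by abel
    _ ≤ a ⊓ c + a ⊓ b := add_le_add_left h4 _
    _ = a ⊓ b + a ⊓ c := add_comm _ _

lemma inf_nsmul_eq_zero' {a b : α} (ha : 0 ≤ a) (hb : 0 ≤ b) (hab : a ⊓ b = 0) (k : ℕ) :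
    a ⊓ (k • b) = 0 := by
  induction k with
  | zero => simpa using inf_eq_right.mpr ha
  | succ k ih =>
    have h1 : a ⊓ ((k + 1) • b) ≤ a ⊓ (k • b) + a ⊓ b := by
      rw [succ_nsmul]
      exact inf_add_le_of_nonneg' ha (nsmul_nonneg hb k) hb
    rw [ih, hab, add_zero] at h1
    exact le_antisymm h1 (le_inf ha (nsmul_nonneg hb _))

lemma nsmul_inf_nsmul_eq_zero' {a b : α} (ha : 0 ≤ a) (hb : 0 ≤ b) (hab : a ⊓ b = 0)
    (j k : ℕ) : (j • a) ⊓ (k • b) = 0 := by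
  have h1 : b ⊓ (j • a) = 0 := inf_nsmul_eq_zero' hb ha (by rwa [inf_comm]) j
  have h2 : (j • a) ⊓ (k • b) = 0 :=
    inf_nsmul_eq_zero' (nsmul_nonneg ha j) hb (by rwa [inf_comm]) k
  exact h2

lemma sub_inf_identity' {y s t : α} (ht : 0 ≤ t) :
    (y - y ⊓ s) ⊓ t = y ⊓ (s + t) - y ⊓ s := by
  have h1 : ((y - y ⊓ s) ⊓ t) + y ⊓ s = y ⊓ (s + t) := by
    rw [inf_add]
    have : y - y ⊓ s + y ⊓ s = y := by abel
    rw [this]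
    have h2 : t + y ⊓ s = (t + y) ⊓ (t + s) := add_inf _ _ _
    rw [h2, ← inf_assoc]
    have h3 : y ⊓ (t + y) = y := inf_eq_left.mpr (le_add_of_nonneg_left ht)
    rw [h3, add_comm]
  exact eq_sub_of_add_eq h1
  
end LatticeLemmas

section PAux

variable {α : Type*} [NormedAddCommGroup α] [Lattice α] [HasSolidNorm α] [IsOrderedAddMonoid α] [NormedSpace ℝ α]

lemma gmono' {g : α →L[ℝ] ℝ} (hg : ∀ z : α, 0 ≤ z → 0 ≤ g z) :
    ∀ {a b : α}, a ≤ b → g a ≤ g b := by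
  intro a b hab
  have h := hg (b - a) (sub_nonneg.mpr hab)
  rw [map_sub] at h
  linarith

noncomputable def pAux (g : α →L[ℝ] ℝ) (e z : α) : ℝ := ⨆ j : ℕ, g (z ⊓ j • e)

lemma pAux_bdd {g : α →L[ℝ] ℝ} (hg : ∀ z : α, 0 ≤ z → 0 ≤ g z) (e z : α) :
    BddAbove (Set.range fun j : ℕ => g (z ⊓ j • e)) := by
  refine ⟨g z, ?_⟩
  rintro _ ⟨j, rfl⟩
  exact gmono' hg inf_le_left

lemma pAux_le {g : α →L[ℝ] ℝ} (hg : ∀ z : α, 0 ≤ z → 0 ≤ g z) (e z : α) :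
    pAux g e z ≤ g z :=
  ciSup_le fun _ => gmono' hg inf_le_left

lemma le_pAux {g : α →L[ℝ] ℝ} (hg : ∀ z : α, 0 ≤ z → 0 ≤ g z) (e z : α) (j : ℕ) :
    g (z ⊓ j • e) ≤ pAux g e z :=
  le_ciSup (pAux_bdd hg e z) j

lemma pAux_nonneg {g : α →L[ℝ] ℝ} (hg : ∀ z : α, 0 ≤ z → 0 ≤ g z) (e : α) {z : α}
    (hz : 0 ≤ z) : 0 ≤ pAux g e z := by
  have h0 : g (z ⊓ (0 : ℕ) • e) = 0 := by
    rw [zero_smul, inf_eq_right.mpr hz, map_zero]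
  have := le_pAux hg e z 0
  rwa [h0] at this

lemma pAux_mono {g : α →L[ℝ] ℝ} (hg : ∀ z : α, 0 ≤ z → 0 ≤ g z) (e : α) {z₁ z₂ : α}
    (h : z₁ ≤ z₂) : pAux g e z₁ ≤ pAux g e z₂ :=
  ciSup_le fun j => (gmono' hg (inf_le_inf_right _ h)).trans (le_pAux hg e z₂ j)

lemma pAux_eq_zero {g : α →L[ℝ] ℝ} (e : α) {z : α} (h : ∀ j : ℕ, z ⊓ j • e = 0) :
    pAux g e z = 0 := by
  unfold pAux
  simp only [h, map_zero, ciSup_const]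

lemma pAux_zero {g : α →L[ℝ] ℝ} {e : α} (he : 0 ≤ e) : pAux g e 0 = 0 :=
  pAux_eq_zero e fun j => inf_eq_left.mpr (nsmul_nonneg he j)

lemma pAux_self {g : α →L[ℝ] ℝ} (hg : ∀ z : α, 0 ≤ z → 0 ≤ g z) {e : α} (he : 0 ≤ e) :
    pAux g e e = g e := by
  refine le_antisymm (pAux_le hg e e) ?_
  have := le_pAux hg e e 1
  rwa [one_smul, inf_idem] at this

lemma pAux_add {g : α →L[ℝ] ℝ} (hg : ∀ z : α, 0 ≤ z → 0 ≤ g z) {e u v : α} (he : 0 ≤ e)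
    (hu : 0 ≤ u) (hv : 0 ≤ v) : pAux g e (u + v) = pAux g e u + pAux g e v := by
  refine le_antisymm ?_ ?_
  · refine ciSup_le fun j => ?_
    have h1 : (u + v) ⊓ (j • e) ≤ u ⊓ j • e + v ⊓ j • e := by
      have h2 := inf_add_le_of_nonneg' (a := j • e) (nsmul_nonneg he j) hu hv
      rw [inf_comm (j • e) u, inf_comm (j • e) v] at h2
      rw [inf_comm]
      exact h2
    calc g ((u + v) ⊓ j • e) ≤ g (u ⊓ j • e + v ⊓ j • e) := gmono' hg h1
      _ = g (u ⊓ j • e) + g (v ⊓ j • e) := map_add _ _ _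
      _ ≤ pAux g e u + pAux g e v := add_le_add (le_pAux hg e u j) (le_pAux hg e v j)
  · have key : ∀ j k : ℕ, g (u ⊓ j • e) + g (v ⊓ k • e) ≤ pAux g e (u + v) := by
      intro j k
      have h2 : u ⊓ j • e + v ⊓ k • e ≤ (u + v) ⊓ ((j + k) • e) := by
        refine le_inf (add_le_add inf_le_left inf_le_left) ?_
        rw [add_nsmul]
        exact add_le_add inf_le_right inf_le_right
      calc g (u ⊓ j • e) + g (v ⊓ k • e) = g (u ⊓ j • e + v ⊓ k • e) := (map_add _ _ _).symm
        _ ≤ g ((u + v) ⊓ (j + k) • e) := gmono' hg h2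
        _ ≤ pAux g e (u + v) := le_pAux hg e (u + v) (j + k)
    have h3 : pAux g e u ≤ pAux g e (u + v) - pAux g e v := by
      refine ciSup_le fun j => ?_
      rw [le_sub_iff_add_le, add_comm, ← le_sub_iff_add_le]
      refine ciSup_le fun k => ?_
      rw [le_sub_iff_add_le, add_comm]
      exact key j k
    linarith

lemma exists_component (g : α →L[ℝ] ℝ) (hg : ∀ z : α, 0 ≤ z → 0 ≤ g z) (e : α) (he : 0 ≤ e) :
    ∃ p : α →L[ℝ] ℝ, ∀ z : α, 0 ≤ z → p z = pAux g e z := by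
  set q : α → ℝ := fun z => pAux g e z⁺ - pAux g e z⁻ with hq
  have hq_add : ∀ z w : α, q (z + w) = q z + q w := by
    intro z w
    have e1 : (z + w)⁺ = z + w + (z + w)⁻ := eq_add_of_sub_eq (posPart_sub_negPart _)
    have e2 : z⁺ = z + z⁻ := eq_add_of_sub_eq (posPart_sub_negPart _)
    have e3 : w⁺ = w + w⁻ := eq_add_of_sub_eq (posPart_sub_negPart _)
    have hid : (z + w)⁺ + (z⁻ + w⁻) = (z + w)⁻ + (z⁺ + w⁺) := by
      rw [e1, e2, e3]; abel
    have hL : pAux g e ((z + w)⁺ + (z⁻ + w⁻)) =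
        pAux g e (z + w)⁺ + (pAux g e z⁻ + pAux g e w⁻) := by
      rw [pAux_add hg he (posPart_nonneg _) (add_nonneg (negPart_nonneg _) (negPart_nonneg _)),
        pAux_add hg he (negPart_nonneg _) (negPart_nonneg _)]
    have hR : pAux g e ((z + w)⁻ + (z⁺ + w⁺)) =
        pAux g e (z + w)⁻ + (pAux g e z⁺ + pAux g e w⁺) := by
      rw [pAux_add hg he (negPart_nonneg _) (add_nonneg (posPart_nonneg _) (posPart_nonneg _)),
        pAux_add hg he (posPart_nonneg _) (posPart_nonneg _)]
    rw [hid, hR] at hL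
    simp only [hq]
    linarith
  have posPart_norm_le : ∀ z : α, ‖z⁺‖ ≤ ‖z‖ := by
    intro z
    refine HasSolidNorm.solid ?_
    rw [abs_of_nonneg (posPart_nonneg z)]
    calc z⁺ ≤ z⁺ + z⁻ := le_add_of_nonneg_right (negPart_nonneg _)
      _ = |z| := posPart_add_negPart _
  have negPart_norm_le : ∀ z : α, ‖z⁻‖ ≤ ‖z‖ := by
    intro z
    refine HasSolidNorm.solid ?_
    rw [abs_of_nonneg (negPart_nonneg z)]
    calc z⁻ ≤ z⁺ + z⁻ := le_add_of_nonneg_left (posPart_nonneg _)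
      _ = |z| := posPart_add_negPart _
  have hq_bound : ∀ z : α, |q z| ≤ ‖g‖ * ‖z‖ := by
    intro z
    have h1 : 0 ≤ pAux g e z⁺ := pAux_nonneg hg e (posPart_nonneg z)
    have h2 : 0 ≤ pAux g e z⁻ := pAux_nonneg hg e (negPart_nonneg z)
    have h3 : pAux g e z⁺ ≤ g z⁺ := pAux_le hg e _
    have h4 : pAux g e z⁻ ≤ g z⁻ := pAux_le hg e _
    have h5 : g z⁺ ≤ ‖g‖ * ‖z‖ := by
      calc g z⁺ ≤ ‖g z⁺‖ := le_abs_self _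
        _ ≤ ‖g‖ * ‖z⁺‖ := g.le_opNorm _
        _ ≤ ‖g‖ * ‖z‖ := by
            exact mul_le_mul_of_nonneg_left (posPart_norm_le z) (norm_nonneg g)
    have h6 : g z⁻ ≤ ‖g‖ * ‖z‖ := by
      calc g z⁻ ≤ ‖g z⁻‖ := le_abs_self _
        _ ≤ ‖g‖ * ‖z⁻‖ := g.le_opNorm _
        _ ≤ ‖g‖ * ‖z‖ := by
            exact mul_le_mul_of_nonneg_left (negPart_norm_le z) (norm_nonneg g)
    rw [abs_le]
    constructor <;> simp only [hq] <;> nlinarith [norm_nonneg g, norm_nonneg z]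
  set qh : α →+ ℝ := AddMonoidHom.mk' q hq_add with hqh
  have hq_sub : ∀ a b : α, q a - q b = q (a - b) := by
    intro a b
    have := hq_add (a - b) b
    rw [sub_add_cancel] at this
    linarith
  have hlip : LipschitzWith (Real.toNNReal ‖g‖) q := by
    refine LipschitzWith.of_dist_le_mul fun a b => ?_
    rw [Real.dist_eq, dist_eq_norm, hq_sub a b]
    calc |q (a - b)| ≤ ‖g‖ * ‖a - b‖ := hq_bound _
      _ = (Real.toNNReal ‖g‖ : ℝ) * ‖a - b‖ := by
          rw [Real.coe_toNNReal _ (norm_nonneg g)]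
  have hcont : Continuous qh := hlip.continuous
  refine ⟨qh.toRealLinearMap hcont, fun z hz => ?_⟩
  show q z = pAux g e z
  simp only [hq]
  rw [posPart_eq_self.mpr hz, negPart_eq_zero.mpr hz, pAux_zero he, sub_zero]

end PAux

section DualLemmas

variable {α : Type*} [NormedAddCommGroup α] [Lattice α] [HasSolidNorm α] [IsOrderedAddMonoid α] [NormedSpace ℝ α]
  [Lattice (StrongDual ℝ α)]
  [CovariantClass (StrongDual ℝ α) (StrongDual ℝ α) (· + ·) (· ≤ ·)]

lemma dual_le_iff (hα : ∀ f : StrongDual ℝ α, 0 ≤ f ↔ ∀ y : α, 0 ≤ y → 0 ≤ f y)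
    {f g : StrongDual ℝ α} : f ≤ g ↔ ∀ y : α, 0 ≤ y → f y ≤ g y := by
  rw [← sub_nonneg, hα (g - f)]
  constructor
  · intro h y hy
    have := h y hy
    rw [ContinuousLinearMap.sub_apply] at this
    linarith
  · intro h y hy
    rw [ContinuousLinearMap.sub_apply]
    have := h y hy
    linarith

lemma comp_inf_eq_zero (hα : ∀ f : StrongDual ℝ α, 0 ≤ f ↔ ∀ y : α, 0 ≤ y → 0 ≤ f y)
    {g₁ g₂ p₁ p₂ : StrongDual ℝ α} {e₁ e₂ : α}
    (hg₁ : ∀ z : α, 0 ≤ z → 0 ≤ g₁ z) (hg₂ : ∀ z : α, 0 ≤ z → 0 ≤ g₂ z)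
    (he₁ : 0 ≤ e₁) (he₂ : 0 ≤ e₂) (hd : e₁ ⊓ e₂ = 0)
    (hp₁ : ∀ z : α, 0 ≤ z → p₁ z = pAux g₁ e₁ z)
    (hp₂ : ∀ z : α, 0 ≤ z → p₂ z = pAux g₂ e₂ z) :
    p₁ ⊓ p₂ = 0 := by
  have hp₁0 : 0 ≤ p₁ := (hα p₁).mpr fun z hz => by
    rw [hp₁ z hz]; exact pAux_nonneg hg₁ _ hz
  have hp₂0 : 0 ≤ p₂ := (hα p₂).mpr fun z hz => by
    rw [hp₂ z hz]; exact pAux_nonneg hg₂ _ hz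
  set w := p₁ ⊓ p₂ with hwdef
  have hw0 : 0 ≤ w := le_inf hp₁0 hp₂0
  have hwle₁ : ∀ z : α, 0 ≤ z → w z ≤ p₁ z := fun z hz =>
    (dual_le_iff hα).mp inf_le_left z hz
  have hwle₂ : ∀ z : α, 0 ≤ z → w z ≤ p₂ z := fun z hz =>
    (dual_le_iff hα).mp inf_le_right z hz
  have key : ∀ yy : α, 0 ≤ yy → w yy ≤ 0 := by
    intro yy hyy
    set φ : ℕ → ℝ := fun k => g₂ (yy ⊓ k • e₂) with hφ
    have hφbdd : BddAbove (Set.range φ) := pAux_bdd hg₂ e₂ yy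
    set L : ℝ := ⨆ k, φ k with hL
    have hstep : ∀ k : ℕ, w yy ≤ L - φ k := by
      intro k
      have hs : 0 ≤ yy ⊓ k • e₂ := le_inf hyy (nsmul_nonneg he₂ k)
      have hv : 0 ≤ yy - yy ⊓ k • e₂ := sub_nonneg.mpr inf_le_left
      have h1 : w (yy ⊓ k • e₂) ≤ 0 := by
        have h1' := hwle₁ _ hs
        rw [hp₁ _ hs] at h1'
        have h2 : pAux g₁ e₁ (yy ⊓ k • e₂) = 0 := by
          refine pAux_eq_zero _ fun j => ?_
          refine le_antisymm ?_ (le_inf hs (nsmul_nonneg he₁ j))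
          calc (yy ⊓ k • e₂) ⊓ j • e₁ ≤ (k • e₂) ⊓ (j • e₁) :=
                inf_le_inf_right _ inf_le_right
            _ = 0 := by
                rw [inf_comm]
                exact nsmul_inf_nsmul_eq_zero' he₁ he₂ hd j k
        rw [h2] at h1'
        exact h1'
      have h3 : w (yy - yy ⊓ k • e₂) ≤ L - φ k := by
        have h4 := hwle₂ _ hv
        rw [hp₂ _ hv] at h4
        have h5 : pAux g₂ e₂ (yy - yy ⊓ k • e₂) ≤ L - φ k := by
          refine ciSup_le fun j => ?_
          have h6 : (yy - yy ⊓ k • e₂) ⊓ j • e₂ = yy ⊓ (k • e₂ + j • e₂) - yy ⊓ k • e₂ :=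
            sub_inf_identity' (nsmul_nonneg he₂ j)
          have h6' : k • e₂ + j • e₂ = (k + j) • e₂ := (add_nsmul e₂ k j).symm
          rw [h6, h6', map_sub]
          have h7 : φ (k + j) ≤ L := le_ciSup hφbdd (k + j)
          simp only [hφ] at h7 ⊢
          linarith
        linarith
      have hsplit : w yy = w (yy ⊓ k • e₂) + w (yy - yy ⊓ k • e₂) := by
        rw [← map_add]
        congr 1
        abel
      linarith
    have h8 : L ≤ L - w yy := by
      refine ciSup_le fun k => ?_
      have := hstep k
      linarith
    linarith
  have hneg : (0 : StrongDual ℝ α) ≤ -w := (hα (-w)).mpr fun y hy => by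
    have := key y hy
    rw [ContinuousLinearMap.neg_apply]
    linarith
  have hwle : w ≤ 0 := by rwa [neg_nonneg] at hneg
  exact le_antisymm hwle hw0

end DualLemmas

theorem stmt11 {E F : Type*} [NormedAddCommGroup E] [Lattice E] [HasSolidNorm E] [IsOrderedAddMonoid E] [NormedSpace ℝ E] [CompleteSpace E]
    [NormedAddCommGroup F] [Lattice F] [HasSolidNorm F] [IsOrderedAddMonoid F] [NormedSpace ℝ F] [CompleteSpace F]
    [Lattice (StrongDual ℝ E)] [HasSolidNorm (StrongDual ℝ E)]
    [CovariantClass (StrongDual ℝ E) (StrongDual ℝ E) (· + ·) (· ≤ ·)]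
    [Lattice (StrongDual ℝ F)] [HasSolidNorm (StrongDual ℝ F)]
    [CovariantClass (StrongDual ℝ F) (StrongDual ℝ F) (· + ·) (· ≤ ·)]
    [Lattice (StrongDual ℝ (StrongDual ℝ E))] [HasSolidNorm (StrongDual ℝ (StrongDual ℝ E))]
    [CovariantClass (StrongDual ℝ (StrongDual ℝ E)) (StrongDual ℝ (StrongDual ℝ E)) (· + ·) (· ≤ ·)]
    (hE' : ∀ f : StrongDual ℝ E, 0 ≤ f ↔ ∀ x : E, 0 ≤ x → 0 ≤ f x) (hF' : ∀ f : StrongDual ℝ F, 0 ≤ f ↔ ∀ y : F, 0 ≤ y → 0 ≤ f y)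
    (hE'' : ∀ G : StrongDual ℝ (StrongDual ℝ E), 0 ≤ G ↔ ∀ f : StrongDual ℝ E, 0 ≤ f → 0 ≤ G f)
    (T : E →L[ℝ] F)
    (h : OrderMWC (ContinuousLinearMap.precomp ℝ T :
        StrongDual ℝ F →L[ℝ] StrongDual ℝ E)) :
    OrderLWC T := by
  intro x hx y hy hdisj
  -- extract u n with |y n| ≤ |T (u n)| and u n ∈ [0, x]
  have hmem : ∀ n, ∃ u : E, u ∈ Set.Icc 0 x ∧ |y n| ≤ |T u| := by
    intro n
    obtain ⟨a, ⟨u, hu, rfl⟩, hle⟩ := hy n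
    exact ⟨u, hu, hle⟩
  choose u hu hyu using hmem
  -- norming functionals
  choose f hf1 hf2 using fun n => exists_dual_vector'' ℝ (y n)
  have habs : ∀ n, ∀ z : F, 0 ≤ z → 0 ≤ |f n| z := fun n z hz =>
    (hF' |f n|).mp (abs_nonneg (f n)) z hz
  -- components G n of |f n| on the band of |y n|
  choose G hG using fun n => exists_component |f n| (habs n) |y n| (abs_nonneg (y n))
  have hGpos : ∀ n, ∀ z : F, 0 ≤ z → 0 ≤ G n z := fun n z hz => by
    rw [hG n z hz]; exact pAux_nonneg (habs n) _ hz
  -- components P n of G n on the band of (T (u n))⁺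
  choose P hP using fun n =>
    exists_component (G n) (hGpos n) (T (u n))⁺ (posPart_nonneg _)
  have hPpos : ∀ n, ∀ z : F, 0 ≤ z → 0 ≤ P n z := fun n z hz => by
    rw [hP n z hz]; exact pAux_nonneg (hGpos n) _ hz
  have hPle : ∀ n, ∀ z : F, 0 ≤ z → P n z ≤ G n z := fun n z hz => by
    rw [hP n z hz]; exact pAux_le (hGpos n) _ _
  set hs : ℕ → StrongDual ℝ F := fun n => P n + P n - G n with hhs
  -- |hs n| ≤ G n ≤ |f n|
  have hGle : ∀ n, G n ≤ |f n| := fun n =>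
    (dual_le_iff hF').mpr fun z hz => by rw [hG n z hz]; exact pAux_le (habs n) _ _
  have habs_hs : ∀ n, |hs n| ≤ G n := by
    intro n
    refine abs_le'.mpr ⟨?_, ?_⟩
    · refine (dual_le_iff hF').mpr fun z hz => ?_
      have h1 := hPle n z hz
      simp only [hhs, ContinuousLinearMap.sub_apply, ContinuousLinearMap.add_apply]
      linarith
    · refine (dual_le_iff hF').mpr fun z hz => ?_
      have h1 := hPpos n z hz
      simp only [hhs, ContinuousLinearMap.neg_apply, ContinuousLinearMap.sub_apply,
        ContinuousLinearMap.add_apply]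
      linarith
  have hnorm_hs : ∀ n, ‖hs n‖ ≤ 1 := by
    intro n
    have h1 : |hs n| ≤ |f n| := (habs_hs n).trans (hGle n)
    have h2 : |hs n| ≤ |(|f n|)| := by rwa [abs_abs]
    refine (HasSolidNorm.solid h2).trans (le_trans ?_ (hf1 n))
    exact HasSolidNorm.solid (le_of_eq (abs_abs (f n)))
  -- disjointness of the sequence hs
  have hdisj_hs : DisjSeq hs := by
    intro m n hmn
    have hGG : G m ⊓ G n = 0 :=
      comp_inf_eq_zero hF' (habs m) (habs n) (abs_nonneg (y m)) (abs_nonneg (y n))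
        (hdisj m n hmn) (hG m) (hG n)
    refine le_antisymm ?_ (le_inf (abs_nonneg _) (abs_nonneg _))
    calc |hs m| ⊓ |hs n| ≤ G m ⊓ G n := inf_le_inf (habs_hs m) (habs_hs n)
      _ = 0 := hGG
  -- evaluation: hs n (T (u n)) = G n |T (u n)|
  have heval : ∀ n, hs n (T (u n)) = G n |T (u n)| := by
    intro n
    set w : F := T (u n) with hw
    have hPw : P n w = G n w⁺ := by
      have e1 : P n w = P n w⁺ - P n w⁻ := by
        conv_lhs => rw [← posPart_sub_negPart w]
        rw [map_sub]
      have e2 : P n w⁺ = G n w⁺ := by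
        rw [hP n _ (posPart_nonneg w)]
        exact pAux_self (hGpos n) (posPart_nonneg w)
      have e3 : P n w⁻ = 0 := by
        rw [hP n _ (negPart_nonneg w)]
        refine pAux_eq_zero _ fun j => ?_
        exact inf_nsmul_eq_zero' (negPart_nonneg w) (posPart_nonneg w)
          (by rw [inf_comm]; exact posPart_inf_negPart_eq_zero w) j
      rw [e1, e2, e3, sub_zero]
    have e4 : G n w = G n w⁺ - G n w⁻ := by
      conv_lhs => rw [← posPart_sub_negPart w]
      rw [map_sub]
    have e5 : G n |w| = G n w⁺ + G n w⁻ := by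
      rw [← posPart_add_negPart w, map_add]
    simp only [hhs, ContinuousLinearMap.sub_apply, ContinuousLinearMap.add_apply]
    rw [hPw, e4, e5]
    ring
  -- norm bound: ‖y n‖ ≤ hs n (T (u n))
  have hbound : ∀ n, ‖y n‖ ≤ hs n (T (u n)) := by
    intro n
    have h1 : f n (y n) ≤ |f n| |y n| := by
      have hfp : ∀ z : F, 0 ≤ z → f n z ≤ |f n| z :=
        (dual_le_iff hF').mp (le_abs_self (f n))
      have hneg : -(f n) ≤ |f n| := neg_le_abs (f n)
      have hfm : ∀ z : F, 0 ≤ z → (-(f n)) z ≤ |f n| z :=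
        (dual_le_iff hF').mp hneg
      have e1 : f n (y n) = f n (y n)⁺ - f n (y n)⁻ := by
        conv_lhs => rw [← posPart_sub_negPart (y n)]
        rw [map_sub]
      have e2 : |f n| |y n| = |f n| (y n)⁺ + |f n| (y n)⁻ := by
        rw [← posPart_add_negPart (y n), map_add]
      have h2 := hfp _ (posPart_nonneg (y n))
      have h3 := hfm _ (negPart_nonneg (y n))
      rw [ContinuousLinearMap.neg_apply] at h3
      rw [e1, e2]
      linarith
    have h4 : |f n| |y n| = G n |y n| := by
      rw [hG n _ (abs_nonneg (y n))]
      exact (pAux_self (habs n) (abs_nonneg (y n))).symm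
    have h5 : G n |y n| ≤ G n |T (u n)| := gmono' (hGpos n) (hyu n)
    calc ‖y n‖ = f n (y n) := (hf2 n).symm
      _ ≤ |f n| |y n| := h1
      _ = G n |y n| := h4
      _ ≤ G n |T (u n)| := h5
      _ = hs n (T (u n)) := (heval n).symm
  -- order boundedness of the double-dual sequence
  set J : E →L[ℝ] StrongDual ℝ (StrongDual ℝ E) :=
    NormedSpace.inclusionInDoubleDual ℝ E with hJ
  have hbdd : OrdBddSeq (fun n => J (u n)) := by
    refine ⟨0, J x, fun n => ⟨?_, ?_⟩⟩
    · refine (hE'' _).mpr fun fE hfE => ?_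
      exact (hE' fE).mp hfE (u n) (hu n).1
    · rw [← sub_nonneg]
      show 0 ≤ J x - J (u n)
      rw [show J x - J (u n) = J (x - u n) from (map_sub J x (u n)).symm]
      refine (hE'' _).mpr fun fE hfE => ?_
      exact (hE' fE).mp hfE (x - u n) (sub_nonneg.mpr (hu n).2)
  -- apply order M-weak compactness of the adjoint
  have htend : Tendsto (fun n => (J (u n)) ((ContinuousLinearMap.precomp ℝ T) (hs n)))
      atTop (𝓝 0) := h hs hnorm_hs hdisj_hs (fun n => J (u n)) hbdd
  have htend' : Tendsto (fun n => hs n (T (u n))) atTop (𝓝 0) := htend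
  exact squeeze_zero (fun n => norm_nonneg (y n)) hbound htend'
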